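/- Let q \in (1/2, 1) and let X and Y be random vectors in R^d. Suppose the floating body F_q(X) contains a Euclidean ball of radius R_min and is contained in a ball of radius R_max. If \delta_q(X,Y) \le R_min/2, then \delta_{Haus}(F_q(X), F_q(Y)) \le (3 R_max / R_min) \cdot \delta_q(X,Y). -/

import Mathlib

open MeasureTheory

/-- The CDF of a (law of a) real random variable. -/
noncomputable def rcdf (μ : Measure ℝ) (t : ℝ) : ℝ := (μ (Set.Iic t)).toReal

/-- The `q`-quantile `Q_q = inf {t : P(X ≤ t) ≥ q}`. -/
noncomputable def quantile (μ : Measure ℝ) (q : ℝ) : ℝ := sInf {t | q ≤ rcdf μ t}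

/-- The `q`-quantile of the marginal `⟨X, θ⟩` of a random vector with law `μ`. -/
noncomputable def dirQuantile {d : ℕ} (μ : Measure (EuclideanSpace ℝ (Fin d))) (q : ℝ)
    (θ : EuclideanSpace ℝ (Fin d)) : ℝ :=
  quantile (μ.map fun x => (inner ℝ x θ : ℝ)) q

/-- The `q`-floating body `F_q(X) = ⋂_{θ ∈ S^{d-1}} {x : ⟨x,θ⟩ ≤ Q_q(⟨X,θ⟩)}`. -/
noncomputable def floatingBody {d : ℕ} (μ : Measure (EuclideanSpace ℝ (Fin d))) (q : ℝ) :
    Set (EuclideanSpace ℝ (Fin d)) :=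
  {x | ∀ θ : EuclideanSpace ℝ (Fin d), ‖θ‖ = 1 → (inner ℝ x θ : ℝ) ≤ dirQuantile μ q θ}

/-- The `q`-distance `δ_q(X,Y) = sup_{θ ∈ S^{d-1}} |Q_q(⟨X,θ⟩) - Q_q(⟨Y,θ⟩)|`. -/
noncomputable def deltaQ {d : ℕ} (μ ν : Measure (EuclideanSpace ℝ (Fin d))) (q : ℝ) : ℝ :=
  ⨆ θ : Metric.sphere (0 : EuclideanSpace ℝ (Fin d)) 1,
    |dirQuantile μ q θ - dirQuantile ν q θ|

lemma dirQuantile_bound {d : ℕ} (μ : Measure (EuclideanSpace ℝ (Fin d)))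
    [IsProbabilityMeasure μ] {q : ℝ} (hq : q ∈ Set.Ioo (1 / 2 : ℝ) 1) :
    ∃ M : ℝ, 0 ≤ M ∧ ∀ θ : EuclideanSpace ℝ (Fin d), ‖θ‖ = 1 → |dirQuantile μ q θ| ≤ M := by
  have htend := tendsto_measure_iUnion_atTop (μ := μ)
      (s := fun n : ℕ => Metric.closedBall (0 : EuclideanSpace ℝ (Fin d)) n)
      (fun m n hmn => Metric.closedBall_subset_closedBall (by exact_mod_cast hmn))
  rw [Metric.iUnion_closedBall_nat, measure_univ] at htend
  have hlt : ENNReal.ofReal q < 1 := ENNReal.ofReal_lt_one.mpr hq.2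
  obtain ⟨n, hn⟩ := (htend.eventually (eventually_gt_nhds hlt)).exists
  set B := Metric.closedBall (0 : EuclideanSpace ℝ (Fin d)) (n : ℝ) with hB
  have hqB : q ≤ (μ B).toReal :=
    (ENNReal.ofReal_le_iff_le_toReal (measure_ne_top μ B)).mp hn.le
  refine ⟨n, n.cast_nonneg, fun θ hθ => ?_⟩
  have hmeas : Measurable fun x : EuclideanSpace ℝ (Fin d) => (inner ℝ x θ : ℝ) :=
    (continuous_id.inner continuous_const).measurable
  have hmap : ∀ t : ℝ, rcdf (μ.map fun x => (inner ℝ x θ : ℝ)) t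
      = (μ {x | (inner ℝ x θ : ℝ) ≤ t}).toReal := by
    intro t
    rw [rcdf, Measure.map_apply hmeas measurableSet_Iic]
    rfl
  -- upper part: n is in the set
  have hmem : (n : ℝ) ∈ {t | q ≤ rcdf (μ.map fun x => (inner ℝ x θ : ℝ)) t} := by
    rw [Set.mem_setOf_eq, hmap]
    refine le_trans hqB (ENNReal.toReal_mono (measure_ne_top μ _) (measure_mono ?_))
    intro x hx
    have h1 : (inner ℝ x θ : ℝ) ≤ ‖x‖ * ‖θ‖ := real_inner_le_norm x θ
    have h2 : ‖x‖ ≤ (n : ℝ) := by simpa [hB] using hx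
    simp only [Set.mem_setOf_eq]
    nlinarith
  -- lower bound on all members of the set
  have hlb : ∀ t ∈ {t | q ≤ rcdf (μ.map fun x => (inner ℝ x θ : ℝ)) t}, -(n : ℝ) ≤ t := by
    intro t ht
    by_contra hcon
    push_neg at hcon
    rw [Set.mem_setOf_eq, hmap] at ht
    have hsub : {x | (inner ℝ x θ : ℝ) ≤ t} ⊆ Bᶜ := by
      intro x hx hxB
      have h1 : |(inner ℝ x θ : ℝ)| ≤ ‖x‖ * ‖θ‖ := abs_real_inner_le_norm x θ
      have h2 : ‖x‖ ≤ (n : ℝ) := by simpa [hB] using hxB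
      have h3 : -(n : ℝ) ≤ (inner ℝ x θ : ℝ) := by nlinarith [neg_abs_le (inner ℝ x θ : ℝ)]
      exact absurd (le_trans h3 hx) (not_le.mpr hcon)
    have hcompl : μ Bᶜ = 1 - μ B := prob_compl_eq_one_sub Metric.isClosed_closedBall.measurableSet
    have h4 : (μ {x | (inner ℝ x θ : ℝ) ≤ t}).toReal ≤ (μ Bᶜ).toReal :=
      ENNReal.toReal_mono (measure_ne_top μ _) (measure_mono hsub)
    rw [hcompl, ENNReal.toReal_sub_of_le prob_le_one ENNReal.one_ne_top] at h4
    simp only [ENNReal.toReal_one] at h4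
    have := hq.1
    linarith [le_trans ht h4]
  rw [abs_le]
  exact ⟨le_csInf ⟨(n : ℝ), hmem⟩ hlb, csInf_le ⟨-(n : ℝ), hlb⟩ hmem⟩

/-- Lemma 5 of Brunel: if `F_q(X)` contains a ball of radius `R_min` and is contained in a
ball of radius `R_max`, and `δ_q(X,Y) ≤ R_min/2`, then
`δ_Haus(F_q(X), F_q(Y)) ≤ (3 R_max / R_min) δ_q(X,Y)`. -/
theorem stmt_9 {d : ℕ} (q Rmin Rmax : ℝ) (hq : q ∈ Set.Ioo (1 / 2 : ℝ) 1)
    (hRmin : 0 < Rmin) (hRmax : 0 < Rmax)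
    (μ ν : Measure (EuclideanSpace ℝ (Fin d))) [IsProbabilityMeasure μ] [IsProbabilityMeasure ν]
    (hball : ∃ a, Metric.closedBall a Rmin ⊆ floatingBody μ q)
    (hcont : ∃ c, floatingBody μ q ⊆ Metric.closedBall c Rmax)
    (hδ : deltaQ μ ν q ≤ Rmin / 2) :
    Metric.hausdorffDist (floatingBody μ q) (floatingBody ν q) ≤
      3 * Rmax / Rmin * deltaQ μ ν q := by
  obtain ⟨a, ha⟩ := hball
  obtain ⟨c, hc⟩ := hcont
  set δ := deltaQ μ ν q with hδdef
  have hδ0 : 0 ≤ δ := Real.iSup_nonneg fun θ => abs_nonneg _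
  -- key: pointwise bound by δ
  have hkey : ∀ θ : EuclideanSpace ℝ (Fin d), ‖θ‖ = 1 →
      |dirQuantile μ q θ - dirQuantile ν q θ| ≤ δ := by
    obtain ⟨M₁, hM₁0, hM₁⟩ := dirQuantile_bound μ hq
    obtain ⟨M₂, hM₂0, hM₂⟩ := dirQuantile_bound ν hq
    intro θ hθ
    have hbdd : BddAbove (Set.range fun θ : Metric.sphere (0 : EuclideanSpace ℝ (Fin d)) 1 =>
        |dirQuantile μ q θ - dirQuantile ν q θ|) := by
      refine ⟨M₁ + M₂, ?_⟩
      rintro _ ⟨η, rfl⟩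
      have hη : ‖(η : EuclideanSpace ℝ (Fin d))‖ = 1 := mem_sphere_zero_iff_norm.mp η.2
      calc |dirQuantile μ q η - dirQuantile ν q η|
          ≤ |dirQuantile μ q η| + |dirQuantile ν q η| := abs_sub _ _
        _ ≤ M₁ + M₂ := add_le_add (hM₁ η hη) (hM₂ η hη)
    exact le_ciSup hbdd (⟨θ, mem_sphere_zero_iff_norm.mpr hθ⟩ :
      Metric.sphere (0 : EuclideanSpace ℝ (Fin d)) 1)
  -- support-type inequality for center a
  have hA : ∀ θ : EuclideanSpace ℝ (Fin d), ‖θ‖ = 1 →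
      (inner ℝ a θ : ℝ) + Rmin ≤ dirQuantile μ q θ := by
    intro θ hθ
    have hmem : a + Rmin • θ ∈ Metric.closedBall a Rmin := by
      simp [dist_eq_norm, norm_smul, abs_of_pos hRmin, hθ]
    have := ha hmem θ hθ
    rw [inner_add_left, real_inner_smul_left] at this
    have hθθ : (inner ℝ θ θ : ℝ) = 1 := by
      rw [real_inner_self_eq_norm_sq, hθ]; norm_num
    rw [hθθ] at this
    linarith
  have haF : a ∈ floatingBody μ q := ha (Metric.mem_closedBall_self hRmin.le)
  have haB : a ∈ Metric.closedBall c Rmax := hc haF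
  have hr0 : 0 ≤ 3 * Rmax / Rmin * δ := by positivity
  refine Metric.hausdorffDist_le_of_infDist hr0 ?_ ?_
  · -- x ∈ F(μ): move toward a by factor t = δ/Rmin
    intro x hx
    set t := δ / Rmin with ht
    have ht0 : 0 ≤ t := by positivity
    have ht1 : t ≤ 1 / 2 := by
      rw [div_le_div_iff₀ hRmin (by norm_num : (0:ℝ) < 2)]
      linarith [hδ]
    set x' := x + t • (a - x) with hx'
    have hx'F : x' ∈ floatingBody ν q := by
      intro θ hθ
      have h1 : (inner ℝ x θ : ℝ) ≤ dirQuantile μ q θ := hx θ hθ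
      have h2 := hA θ hθ
      have h3 : dirQuantile μ q θ - dirQuantile ν q θ ≤ δ :=
        (abs_le.mp (hkey θ hθ)).2
      have hinner : (inner ℝ x' θ : ℝ) = (1 - t) * inner ℝ x θ + t * inner ℝ a θ := by
        simp only [hx', inner_add_left, real_inner_smul_left, inner_sub_left]
        ring
      rw [hinner]
      have htR : t * Rmin = δ := by
        rw [ht]; field_simp
      nlinarith
    have hdist : dist x x' = t * ‖a - x‖ := by
      rw [dist_eq_norm, hx']
      simp [norm_smul, abs_of_nonneg ht0]
    have hax : ‖a - x‖ ≤ 2 * Rmax := by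
      have h1 : dist a c ≤ Rmax := Metric.mem_closedBall.mp haB
      have h2 : dist x c ≤ Rmax := Metric.mem_closedBall.mp (hc hx)
      calc ‖a - x‖ = dist a x := (dist_eq_norm a x).symm
        _ ≤ dist a c + dist c x := dist_triangle a c x
        _ ≤ Rmax + Rmax := add_le_add h1 (by rwa [dist_comm])
        _ = 2 * Rmax := by ring
    have : Metric.infDist x (floatingBody ν q) ≤ dist x x' :=
      Metric.infDist_le_dist_of_mem hx'F
    have hfin : dist x x' ≤ 3 * Rmax / Rmin * δ := by
      rw [hdist, ht]
      rw [div_mul_eq_mul_div, div_mul_eq_mul_div, div_le_div_iff₀ hRmin hRmin]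
      nlinarith [mul_le_mul_of_nonneg_left hax hδ0,
        mul_nonneg (mul_nonneg hδ0 hRmax.le) hRmin.le,
        mul_pos hRmax hRmin]
    linarith
  · -- y ∈ F(ν): move toward a by factor s = δ/(Rmin+δ)
    intro y hy
    set s := δ / (Rmin + δ) with hs
    have hRδ : 0 < Rmin + δ := by linarith
    have hs0 : 0 ≤ s := by positivity
    have hs1 : s < 1 := by
      rw [hs, div_lt_one hRδ]; linarith
    set y' := y + s • (a - y) with hy'
    have hy'F : y' ∈ floatingBody μ q := by
      intro θ hθ
      have h1 : (inner ℝ y θ : ℝ) ≤ dirQuantile ν q θ := hy θ hθ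
      have h2 := hA θ hθ
      have h3 : dirQuantile ν q θ - dirQuantile μ q θ ≤ δ := by
        have := (abs_le.mp (hkey θ hθ)).1; linarith
      have hinner : (inner ℝ y' θ : ℝ) = (1 - s) * inner ℝ y θ + s * inner ℝ a θ := by
        simp only [hy', inner_add_left, real_inner_smul_left, inner_sub_left]
        ring
      rw [hinner]
      have hsR : s * (Rmin + δ) = δ := by
        rw [hs]; field_simp
      nlinarith
    have hdist : dist y y' = s * ‖a - y‖ := by
      rw [dist_eq_norm, hy']
      simp [norm_smul, abs_of_nonneg hs0]
    -- bound ‖a - y‖ via ‖a - y'‖ ≤ 2 Rmax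
    have hay' : ‖a - y'‖ ≤ 2 * Rmax := by
      have h1 : dist a c ≤ Rmax := Metric.mem_closedBall.mp haB
      have h2 : dist y' c ≤ Rmax := Metric.mem_closedBall.mp (hc hy'F)
      calc ‖a - y'‖ = dist a y' := (dist_eq_norm a y').symm
        _ ≤ dist a c + dist c y' := dist_triangle a c y'
        _ ≤ Rmax + Rmax := add_le_add h1 (by rwa [dist_comm])
        _ = 2 * Rmax := by ring
    have hrel : a - y' = (1 - s) • (a - y) := by
      rw [hy']; module
    have hay : (1 - s) * ‖a - y‖ ≤ 2 * Rmax := by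
      have : ‖a - y'‖ = (1 - s) * ‖a - y‖ := by
        rw [hrel, norm_smul, Real.norm_eq_abs, abs_of_nonneg (by linarith : (0:ℝ) ≤ 1 - s)]
      linarith [hay']
    have : Metric.infDist y (floatingBody μ q) ≤ dist y y' :=
      Metric.infDist_le_dist_of_mem hy'F
    have hfin : dist y y' ≤ 3 * Rmax / Rmin * δ := by
      rw [hdist]
      -- s * ‖a-y‖ ≤ s/(1-s) * 2Rmax = δ/Rmin * 2Rmax ≤ 3Rmax/Rmin δ
      have h1s : (0:ℝ) < 1 - s := by linarith
      have hn : 0 ≤ ‖a - y‖ := norm_nonneg _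
      have h1sv : 1 - s = Rmin / (Rmin + δ) := by
        rw [hs]; field_simp; ring
      have hayb : ‖a - y‖ ≤ 2 * Rmax / (1 - s) := by
        rw [le_div_iff₀ h1s]; linarith [hay]
      calc s * ‖a - y‖ ≤ s * (2 * Rmax / (1 - s)) := by
            exact mul_le_mul_of_nonneg_left hayb hs0
        _ = δ / Rmin * (2 * Rmax) := by
            rw [hs, h1sv]; field_simp
        _ ≤ 3 * Rmax / Rmin * δ := by
            rw [div_mul_eq_mul_div, div_mul_eq_mul_div, div_le_div_iff₀ hRmin hRmin]
            nlinarith [mul_nonneg (mul_nonneg hδ0 hRmax.le) hRmin.le]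
    linarith
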